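/- For every n ≥ 20 there exists a triangle-free simple graph G on n vertices with d_2(G) = 4 and e(G) = ⌊(n−4)²/4⌋ + 16. -/

import Mathlib

/-- `d2 G` is the minimum number of vertices whose deletion makes `G` bipartite. -/
noncomputable def d2 {V : Type*} [Fintype V] (G : SimpleGraph V) : ℕ :=
  sInf {k : ℕ | ∃ T : Set V, T.ncard = k ∧ (G.induce Tᶜ).Colorable 2}

def lab (n : ℕ) (v : Fin n) : ZMod 5 :=
  if v.val < 4 then 0
  else if v.val < n/2 - 2 then 1
  else if v.val < n - 8 then 2
  else if v.val < n - 4 then 3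
  else 4

def myG (n : ℕ) : SimpleGraph (Fin n) where
  Adj u v := lab n v = lab n u + 1 ∨ lab n u = lab n v + 1
  symm := by constructor; intro u v h; tauto
  loopless := by
    constructor; intro v h
    have : ∀ x : ZMod 5, ¬ (x = x + 1 ∨ x = x + 1) := by decide
    exact this _ h

instance (n : ℕ) : DecidableRel (myG n).Adj := fun u v => by
  show Decidable (lab n v = lab n u + 1 ∨ lab n u = lab n v + 1)
  infer_instance

lemma myG_adj (n : ℕ) (u v : Fin n) :
    (myG n).Adj u v ↔ (lab n v = lab n u + 1 ∨ lab n u = lab n v + 1) := Iff.rfl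

lemma card_int (n a b : ℕ) (hb : b ≤ n) :
    (Finset.univ.filter fun v : Fin n => a ≤ v.val ∧ v.val < b).card = b - a := by
  have h : (Finset.univ.filter fun v : Fin n => a ≤ v.val ∧ v.val < b).map Fin.valEmbedding
      = Finset.Ico a b := by
    ext m
    simp only [Finset.mem_map, Finset.mem_filter, Finset.mem_univ, true_and,
      Fin.valEmbedding_apply, Finset.mem_Ico]
    constructor
    · rintro ⟨v, hv, rfl⟩; exact hv
    · rintro ⟨h1, h2⟩; exact ⟨⟨m, lt_of_lt_of_le h2 hb⟩, ⟨h1, h2⟩, rfl⟩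
  have := congrArg Finset.card h
  rwa [Finset.card_map, Nat.card_Ico] at this

section
variable (n : ℕ) (v : Fin n)

lemma lab0 : lab n v = 0 ↔ 0 ≤ v.val ∧ v.val < 4 := by
  have hv := v.isLt
  unfold lab; split_ifs <;> constructor <;> intro h <;>
    first | rfl | omega | (exact absurd h (by decide))

lemma lab1 (hn : 20 ≤ n) : lab n v = 1 ↔ 4 ≤ v.val ∧ v.val < n/2 - 2 := by
  have hv := v.isLt
  unfold lab; split_ifs <;> constructor <;> intro h <;>
    first | rfl | omega | (exact absurd h (by decide))

lemma lab2 (hn : 20 ≤ n) : lab n v = 2 ↔ n/2 - 2 ≤ v.val ∧ v.val < n - 8 := by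
  have hv := v.isLt
  unfold lab; split_ifs <;> constructor <;> intro h <;>
    first | rfl | omega | (exact absurd h (by decide))

lemma lab3 (hn : 20 ≤ n) : lab n v = 3 ↔ n - 8 ≤ v.val ∧ v.val < n - 4 := by
  have hv := v.isLt
  unfold lab; split_ifs <;> constructor <;> intro h <;>
    first | rfl | omega | (exact absurd h (by decide))

lemma lab4 (hn : 20 ≤ n) : lab n v = 4 ↔ n - 4 ≤ v.val ∧ v.val < n := by
  have hv := v.isLt
  unfold lab; split_ifs <;> constructor <;> intro h <;>
    first | rfl | omega | (exact absurd h (by decide))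

end

section cards
variable (n : ℕ)

/-- the fiber of label `i` -/
def fib (i : ZMod 5) : Finset (Fin n) := Finset.univ.filter fun v => lab n v = i

lemma fib0 (hn : 20 ≤ n) : (fib n 0).card = 4 := by
  unfold fib
  rw [Finset.filter_congr (fun v _ => lab0 n v), card_int n 0 4 (by omega)]

lemma fib1 (hn : 20 ≤ n) : (fib n 1).card = n/2 - 6 := by
  unfold fib
  rw [Finset.filter_congr (fun v _ => lab1 n v hn), card_int n 4 (n/2-2) (by omega)]
  omega

lemma fib2 (hn : 20 ≤ n) : (fib n 2).card = n - 6 - n/2 := by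
  unfold fib
  rw [Finset.filter_congr (fun v _ => lab2 n v hn), card_int n (n/2-2) (n-8) (by omega)]
  omega

lemma fib3 (hn : 20 ≤ n) : (fib n 3).card = 4 := by
  unfold fib
  rw [Finset.filter_congr (fun v _ => lab3 n v hn), card_int n (n-8) (n-4) (by omega)]
  omega

lemma fib4 (hn : 20 ≤ n) : (fib n 4).card = 4 := by
  unfold fib
  rw [Finset.filter_congr (fun v _ => lab4 n v hn), card_int n (n-4) n (by omega)]
  omega

lemma fib_ge (hn : 20 ≤ n) (i : ZMod 5) : 4 ≤ (fib n i).card := by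
  have h5 : i = 0 ∨ i = 1 ∨ i = 2 ∨ i = 3 ∨ i = 4 := by
    revert i; decide
  rcases h5 with rfl | rfl | rfl | rfl | rfl
  · rw [fib0 n hn]
  · rw [fib1 n hn]; omega
  · rw [fib2 n hn]; omega
  · rw [fib3 n hn]
  · rw [fib4 n hn]

end cards

lemma zmod_sum (g : ZMod 5 → ℕ) : ∑ j : ZMod 5, g j = g 0 + g 1 + g 2 + g 3 + g 4 := by
  exact Fin.sum_univ_five (f := g)

lemma neighborFinset_eq (n : ℕ) (v : Fin n) :
    (myG n).neighborFinset v = fib n (lab n v + 1) ∪ fib n (lab n v + 4) := by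
  ext u
  simp only [SimpleGraph.mem_neighborFinset, myG_adj, fib, Finset.mem_union,
    Finset.mem_filter, Finset.mem_univ, true_and]
  have key : ∀ x y : ZMod 5, (x = y + 1 ↔ y = x + 4) := by decide
  constructor
  · rintro (h | h)
    · exact Or.inl h
    · exact Or.inr ((key _ _).mp h)
  · rintro (h | h)
    · exact Or.inl h
    · exact Or.inr ((key _ _).mpr h)

lemma degree_eq (n : ℕ) (v : Fin n) :
    (myG n).degree v = (fib n (lab n v + 1)).card + (fib n (lab n v + 4)).card := by
  rw [← SimpleGraph.card_neighborFinset_eq_degree, neighborFinset_eq,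
    Finset.card_union_of_disjoint]
  rw [Finset.disjoint_left]
  intro u hu1 hu2
  simp only [fib, Finset.mem_filter] at hu1 hu2
  have : ∀ x : ZMod 5, x + 1 ≠ x + 4 := by decide
  exact this (lab n v) (hu1.2 ▸ hu2.2 ▸ rfl)

lemma twice_edges (n : ℕ) :
    2 * (myG n).edgeFinset.card
      = ∑ j : ZMod 5, (fib n j).card * ((fib n (j + 1)).card + (fib n (j + 4)).card) := by
  rw [← SimpleGraph.sum_degrees_eq_twice_card_edges]
  have h1 : ∀ v : Fin n, (myG n).degree v
      = (fib n (lab n v + 1)).card + (fib n (lab n v + 4)).card := degree_eq n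
  calc ∑ v, (myG n).degree v
      = ∑ v : Fin n, ((fib n (lab n v + 1)).card + (fib n (lab n v + 4)).card) := by
        exact Finset.sum_congr rfl fun v _ => h1 v
    _ = ∑ j : ZMod 5, ∑ _v ∈ Finset.univ.filter (fun v => lab n v = j),
          ((fib n (j + 1)).card + (fib n (j + 4)).card) := by
        rw [Finset.sum_fiberwise' Finset.univ (lab n)
          (fun j => (fib n (j + 1)).card + (fib n (j + 4)).card)]
    _ = _ := by
        refine Finset.sum_congr rfl fun j _ => ?_
        rw [Finset.sum_const, smul_eq_mul]
        rfl

lemma edge_count (n : ℕ) (hn : 20 ≤ n) :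
    (myG n).edgeFinset.card = (n - 4)^2/4 + 16 := by
  have h2e := twice_edges n
  rw [zmod_sum] at h2e
  rw [show (0:ZMod 5)+1 = 1 by decide, show (0:ZMod 5)+4 = 4 by decide,
      show (1:ZMod 5)+1 = 2 by decide, show (1:ZMod 5)+4 = 0 by decide,
      show (2:ZMod 5)+1 = 3 by decide, show (2:ZMod 5)+4 = 1 by decide,
      show (3:ZMod 5)+1 = 4 by decide, show (3:ZMod 5)+4 = 2 by decide,
      show (4:ZMod 5)+1 = 0 by decide, show (4:ZMod 5)+4 = 3 by decide,
      fib0 n hn, fib1 n hn, fib2 n hn, fib3 n hn, fib4 n hn] at h2e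
  obtain ⟨a, ha⟩ : ∃ a, n/2 = a + 6 := ⟨n/2 - 6, by omega⟩
  rcases Nat.even_or_odd n with ⟨m, hm⟩ | ⟨m, hm⟩
  · have hp : n/2 - 6 = a := by omega
    have hq : n - 6 - n/2 = a := by omega
    rw [hp, hq] at h2e
    have hn4 : n - 4 = 2*(a+4) := by omega
    rw [hn4]
    have hsq : (2*(a+4))^2 = 4*((a+4)^2) := by ring
    rw [hsq, Nat.mul_div_cancel_left _ (by norm_num : 0 < 4)]
    have hkey : 4*(a + 4) + a*(a + 4) + a*(4 + a) + 4*(4 + a) + 4*(4+4)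
        = 2*((a+4)^2 + 16) := by ring
    linarith [h2e, hkey]
  · have hp : n/2 - 6 = a := by omega
    have hq : n - 6 - n/2 = a + 1 := by omega
    rw [hp, hq] at h2e
    have hn4 : n - 4 = 2*a + 9 := by omega
    rw [hn4]
    have hsq : (2*a+9)^2 = 4*(a*a + 9*a + 20) + 1 := by ring
    rw [hsq, Nat.mul_add_div (by norm_num : 0 < 4),
      show (1:ℕ)/4 = 0 from rfl, Nat.add_zero]
    have hkey : 4*(a + 4) + a*((a+1) + 4) + (a+1)*(4 + a) + 4*(4 + (a+1)) + 4*(4+4)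
        = 2*(a*a + 9*a + 20 + 16) := by ring
    linarith [h2e, hkey]

lemma myG_cliqueFree (n : ℕ) : (myG n).CliqueFree 3 := by
  intro s hs
  obtain ⟨a, b, c, hab, hac, hbc, rfl⟩ := Finset.card_eq_three.mp hs.2
  have h1 : (myG n).Adj a b := hs.1 (by simp) (by simp) hab
  have h2 : (myG n).Adj a c := hs.1 (by simp) (by simp) hac
  have h3 : (myG n).Adj b c := hs.1 (by simp) (by simp) hbc
  rw [myG_adj] at h1 h2 h3
  have key : ∀ x y z : ZMod 5, (y = x + 1 ∨ x = y + 1) → (z = x + 1 ∨ x = z + 1) →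
      (z = y + 1 ∨ y = z + 1) → False := by decide
  exact key (lab n a) (lab n b) (lab n c) h1 h2 h3

lemma d2_mem (n : ℕ) (hn : 20 ≤ n) :
    ∃ T : Set (Fin n), T.ncard = 4 ∧ ((myG n).induce Tᶜ).Colorable 2 := by
  refine ⟨{v | lab n v = 0}, ?_, ?_⟩
  · have hco : ({v | lab n v = 0} : Set (Fin n)) = ↑(fib n 0) := by
      ext v; simp [fib]
    rw [hco, Set.ncard_coe_finset, fib0 n hn]
  · refine ⟨SimpleGraph.Coloring.mk
      (fun w => if lab n w.val = 1 ∨ lab n w.val = 3 then 0 else 1) ?_⟩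
    intro a b hadj
    have hAdj : (myG n).Adj a.val b.val := hadj
    have ha : lab n a.val ≠ 0 := a.2
    have hb : lab n b.val ≠ 0 := b.2
    rw [myG_adj] at hAdj
    have key : ∀ x y : ZMod 5, x ≠ 0 → y ≠ 0 → (y = x + 1 ∨ x = y + 1) →
        (if x = 1 ∨ x = 3 then (0 : Fin 2) else 1) ≠
          (if y = 1 ∨ y = 3 then 0 else 1) := by decide
    exact key _ _ ha hb hAdj

theorem stmt_4' (n : ℕ) (hn : 20 ≤ n) :
    ∃ G : SimpleGraph (Fin n), G.CliqueFree 3 ∧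
      sInf {k : ℕ | ∃ T : Set (Fin n), T.ncard = k ∧ (G.induce Tᶜ).Colorable 2} = 4 ∧
      G.edgeSet.ncard = (n - 4) ^ 2 / 4 + 16 := by
  classical
  obtain ⟨T0, hT0, hcol0⟩ := d2_mem n hn
  refine ⟨myG n, myG_cliqueFree n, ?_, ?_⟩
  · have hmem : 4 ∈ {k : ℕ | ∃ T : Set (Fin n), T.ncard = k ∧
        ((myG n).induce Tᶜ).Colorable 2} := ⟨T0, hT0, hcol0⟩
    apply le_antisymm (Nat.sInf_le hmem)
    apply le_csInf ⟨4, hmem⟩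
    rintro k ⟨T, hTk, ⟨C⟩⟩
    by_contra hlt
    push_neg at hlt
    have hT3 : T.toFinset.card ≤ 3 := by
      rw [← Set.ncard_eq_toFinset_card']; omega
    have hpick : ∀ i : ZMod 5, ∃ v : Fin n, lab n v = i ∧ v ∉ T := by
      intro i
      by_contra hc
      push_neg at hc
      have hsub : fib n i ⊆ T.toFinset := by
        intro v hv
        rw [Set.mem_toFinset]
        exact hc v ((Finset.mem_filter.mp hv).2)
      have h1 := Finset.card_le_card hsub
      have h4 := fib_ge n hn i
      omega
    choose w hw1 hw2 using hpick
    set W : ZMod 5 → ↥(Tᶜ) := fun i => ⟨w i, hw2 i⟩ with hW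
    have hadj : ∀ i : ZMod 5, ((myG n).induce Tᶜ).Adj (W i) (W (i+1)) := by
      intro i
      show (myG n).Adj (w i) (w (i+1))
      rw [myG_adj]
      left
      rw [hw1, hw1]
    have hC : ∀ i : ZMod 5, C (W i) ≠ C (W (i+1)) := fun i => C.valid (hadj i)
    have key : ∀ x0 x1 x2 x3 x4 : Fin 2,
        ¬(x0 ≠ x1 ∧ x1 ≠ x2 ∧ x2 ≠ x3 ∧ x3 ≠ x4 ∧ x4 ≠ x0) := by decide
    have h0 := hC 0; have h1 := hC 1; have h2 := hC 2; have h3 := hC 3; have h4 := hC 4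
    rw [show (0:ZMod 5)+1 = 1 by decide] at h0
    rw [show (1:ZMod 5)+1 = 2 by decide] at h1
    rw [show (2:ZMod 5)+1 = 3 by decide] at h2
    rw [show (3:ZMod 5)+1 = 4 by decide] at h3
    rw [show (4:ZMod 5)+1 = 0 by decide] at h4
    exact key _ _ _ _ _ ⟨h0, h1, h2, h3, h4⟩
  · rw [Set.ncard_eq_toFinset_card']
    exact edge_count n hn

theorem stmt_4 (n : ℕ) (hn : 20 ≤ n) :
    ∃ G : SimpleGraph (Fin n), G.CliqueFree 3 ∧ d2 G = 4 ∧
      G.edgeSet.ncard = (n - 4) ^ 2 / 4 + 16 := by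
  obtain ⟨G, h1, h2, h3⟩ := stmt_4' n hn
  exact ⟨G, h1, by unfold d2; exact h2, h3⟩
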